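/- Let H ∈ (0,1) and 0 ≤ a < x < b. Set w⁻ = (b − x)/(b − a) and w⁺ = (x − a)/(b − a). Then k_{1,H}(x,x) − 2w⁻k_{1,H}(x,a) − 2w⁺k_{1,H}(x,b) + (w⁻)²k_{1,H}(a,a) + 2w⁻w⁺k_{1,H}(a,b) + (w⁺)²k_{1,H}(b,b) = ((b − x)(x − a) / (2(H+1)(2H+1)(b − a))) · [ (b − a)^{2H+1} − (b − x)^{2H+1} − (x − a)^{2H+1} ]. -/

import Mathlib

/-- The integrated fractional Brownian motion kernel `k_{1,H}`. -/
noncomputable def kIFBM (H x y : ℝ) : ℝ :=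
  (1 / (2 * (2 * H + 1))) *
    (y * x ^ (2 * H + 1) + x * y ^ (2 * H + 1) -
      (1 / (2 * (H + 1))) * (x ^ (2 * H + 2) + y ^ (2 * H + 2) - |x - y| ^ (2 * H + 2)))

/-- The expected squared error of the linear interpolant `m(x) = w⁻f(a) + w⁺f(b)` for a centred
Gaussian process `f` with covariance `k`, where `w⁻ = (b-x)/(b-a)`, `w⁺ = (x-a)/(b-a)`. -/
noncomputable def errE (k : ℝ → ℝ → ℝ) (a b x : ℝ) : ℝ :=
  k x x - 2 * ((b - x) / (b - a)) * k x a - 2 * ((x - a) / (b - a)) * k x b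
    + ((b - x) / (b - a)) ^ 2 * k a a
    + 2 * ((b - x) / (b - a)) * ((x - a) / (b - a)) * k a b
    + ((x - a) / (b - a)) ^ 2 * k b b

/-- For `H ∈ (0,1)` and `0 ≤ a < x < b`, the expected squared error of the linear interpolant
under the integrated fractional Brownian motion kernel has the closed form
`((b−x)(x−a)/(2(H+1)(2H+1)(b−a))) ((b−a)^{2H+1} − (b−x)^{2H+1} − (x−a)^{2H+1})`. -/
theorem errE_kIFBM (H a b x : ℝ) (hH0 : 0 < H) (hH1 : H < 1)
    (ha : 0 ≤ a) (hax : a < x) (hxb : x < b) :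
    errE (kIFBM H) a b x =
      ((b - x) * (x - a) / (2 * (H + 1) * (2 * H + 1) * (b - a))) *
        ((b - a) ^ (2 * H + 1) - (b - x) ^ (2 * H + 1) - (x - a) ^ (2 * H + 1)) := by
  have hab : a < b := hax.trans hxb
  have hba : (0:ℝ) < b - a := by linarith
  have hxa : (0:ℝ) < x - a := by linarith
  have hbx : (0:ℝ) < b - x := by linarith
  have hPne : (2 * H + 1) + 1 ≠ 0 := by linarith
  have key : ∀ t : ℝ, 0 ≤ t → t ^ ((2 * H + 1) + 1) = t ^ (2 * H + 1) * t := by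
    intro t ht
    rw [Real.rpow_add' ht hPne, Real.rpow_one]
  have hsplit : (2 * H + 2) = (2 * H + 1) + 1 := by ring
  unfold errE kIFBM
  rw [hsplit, sub_self x, abs_zero, Real.zero_rpow hPne,
    abs_of_pos hxa, show |x - b| = b - x by rw [abs_sub_comm]; exact abs_of_pos hbx,
    show |a - b| = b - a by rw [abs_sub_comm]; exact abs_of_pos hba,
    key x (by linarith), key a ha, key b (by linarith),
    key (x - a) hxa.le, key (b - x) hbx.le, key (b - a) hba.le]
  have h1 : (2 * H + 1) ≠ 0 := by linarith
  have h2 : (H + 1) ≠ 0 := by linarith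
  generalize x ^ (2 * H + 1) = X
  generalize a ^ (2 * H + 1) = A
  generalize b ^ (2 * H + 1) = B
  generalize (x - a) ^ (2 * H + 1) = U
  generalize (b - x) ^ (2 * H + 1) = V
  generalize (b - a) ^ (2 * H + 1) = S
  simp only [sub_self, abs_zero, Real.zero_rpow hPne]
  field_simp
  ring
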